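/- Let A be a pre-associative algebra (operations * and juxtaposition) and let a(z), b(z), c(z) be pairwise mutually *-local and ≻-local formal distributions over A. Then for every n ∈ ℤ₊: (i) the pair (a(z), (b₍ₙ₎c)(z)) formed with the ≻-product is ≻-local; (ii) the pair (a(z), (b⁎₍ₙ₎c)(z)) formed with the *-n-product is both *-local and ≻-local; (iii) the pair ((a⁎₍ₙ₎b)(z), c(z)) is both *-local and ≻-local. -/
import Mathlib


variable {k A : Type*} [Field k] [CharZero k] [AddCommGroup A] [Module k A]

/-- `Σ_{s=0}^{N} (−1)^s C(N,s) op(x_{n−s}, y_{m+s})` for a bilinear operation `op`. -/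
def locSum (op : A →ₗ[k] A →ₗ[k] A) (x y : ℤ → A) (N : ℕ) (n m : ℤ) : A :=
  ∑ s ∈ Finset.range (N + 1),
    ((-1) ^ s * (N.choose s) : ℤ) • op (x (n - (s : ℤ))) (y (m + (s : ℤ)))

/-- Locality of the pair `(x(z), y(z))` with respect to the operation `op`. -/
def IsLocalPair (op : A →ₗ[k] A →ₗ[k] A) (x y : ℤ → A) : Prop :=
  ∃ N : ℕ, ∀ n m : ℤ, locSum op x y N n m = 0

/-- The `n`-th product with respect to the operation `op`:
`(x₍ₙ₎y)ₘ = Σ_{s≥0} (−1)^s C(n,s) op(x_{n−s}, y_{m+s})`. -/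
def nProd (op : A →ₗ[k] A →ₗ[k] A) (x y : ℤ → A) (n : ℕ) : ℤ → A :=
  fun m => locSum op x y n (n : ℤ) m

set_option linter.unusedSectionVars false
set_option linter.unusedVariables false
set_option maxHeartbeats 1000000

namespace DongAux

/-- Shift operator on three-index distributions. -/
def Sh (k : Type*) {A : Type*} [Field k] [AddCommGroup A] [Module k A]
    (v : ℤ × ℤ × ℤ) : Module.End k (ℤ × ℤ × ℤ → A) where
  toFun f := fun q => f (q + v)
  map_add' _ _ := rfl
  map_smul' _ _ := rfl

lemma Sh_apply (v : ℤ × ℤ × ℤ) (f : ℤ × ℤ × ℤ → A) (q : ℤ × ℤ × ℤ) :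
    Sh k v f q = f (q + v) := rfl

lemma commute_Sh (u v : ℤ × ℤ × ℤ) : Commute (Sh k (A := A) u) (Sh k v) := by
  apply LinearMap.ext; intro f; funext q
  show f (q + u + v) = f (q + v + u)
  rw [add_right_comm]

lemma Sh_pow_apply (v : ℤ × ℤ × ℤ) (m : ℕ) (f : ℤ × ℤ × ℤ → A) (q : ℤ × ℤ × ℤ) :
    ((Sh k v) ^ m) f q = f (q + m • v) := by
  induction m generalizing f with
  | zero => simp
  | succ m ih =>
    rw [pow_succ, Module.End.mul_apply, ih, Sh_apply, succ_nsmul, add_assoc]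

lemma negSh_pow_apply (v : ℤ × ℤ × ℤ) (m : ℕ) (f : ℤ × ℤ × ℤ → A) (q : ℤ × ℤ × ℤ) :
    ((-Sh k v) ^ m) f q = ((-1 : ℤ) ^ m) • f (q + m • v) := by
  induction m generalizing f with
  | zero => simp
  | succ m ih =>
    rw [pow_succ, Module.End.mul_apply]
    have h : (-Sh k (A := A) v) f = -(Sh k v f) := rfl
    rw [h, map_neg, Pi.neg_apply, ih, Sh_apply, pow_succ, mul_smul,
      succ_nsmul, ← add_assoc]
    simp

/-- `(Sh u − Sh v)^n` evaluated. -/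
lemma sub_pow_apply (u v : ℤ × ℤ × ℤ) (n : ℕ) (f : ℤ × ℤ × ℤ → A) (q : ℤ × ℤ × ℤ) :
    ((Sh k u - Sh k v : Module.End k (ℤ × ℤ × ℤ → A)) ^ n) f q
      = ∑ s ∈ Finset.range (n + 1),
          ((-1) ^ s * (n.choose s) : ℤ) • f (q + (n - s) • u + s • v) := by
  have hc : Commute (Sh k (A := A) u) (-Sh k v) :=
    (commute_Sh (k := k) (A := A) u v).neg_right
  rw [sub_eq_add_neg, hc.add_pow]
  rw [LinearMap.sum_apply, Finset.sum_apply]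
  rw [← Finset.sum_range_reflect]
  simp only [Nat.add_sub_cancel]
  apply Finset.sum_congr rfl
  intro s hs
  rw [Finset.mem_range, Nat.lt_succ_iff] at hs
  rw [Nat.sub_sub_self hs, Nat.choose_symm hs]
  rw [Module.End.mul_apply, Module.End.mul_apply, Module.End.natCast_apply,
    map_nsmul, map_nsmul, Pi.smul_apply, Sh_pow_apply, negSh_pow_apply,
    mul_smul, natCast_zsmul, smul_comm]

def XX (k : Type*) (A : Type*) [Field k] [AddCommGroup A] [Module k A] :
    Module.End k (ℤ × ℤ × ℤ → A) := Sh k (1, 0, 0) - Sh k (0, 1, 0)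

def YY (k : Type*) (A : Type*) [Field k] [AddCommGroup A] [Module k A] :
    Module.End k (ℤ × ℤ × ℤ → A) := Sh k (0, 1, 0) - Sh k (0, 0, 1)

def ZZ (k : Type*) (A : Type*) [Field k] [AddCommGroup A] [Module k A] :
    Module.End k (ℤ × ℤ × ℤ → A) := Sh k (1, 0, 0) - Sh k (0, 0, 1)

lemma ZZ_eq : ZZ k A = XX k A + YY k A := (sub_add_sub_cancel _ _ _).symm

lemma commute_XY : Commute (XX k A) (YY k A) :=
  Commute.sub_left
    ((commute_Sh _ _).sub_right (commute_Sh _ _))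
    ((commute_Sh _ _).sub_right (commute_Sh _ _))

lemma XX_pow_apply (n : ℕ) (f : ℤ × ℤ × ℤ → A) (q : ℤ × ℤ × ℤ) :
    ((XX k A) ^ n) f q
      = ∑ s ∈ Finset.range (n + 1),
          ((-1) ^ s * (n.choose s) : ℤ) • f (q.1 + n - s, q.2.1 + s, q.2.2) := by
  rw [XX, sub_pow_apply]
  refine Finset.sum_congr rfl fun s hs => ?_
  rw [Finset.mem_range, Nat.lt_succ_iff] at hs
  have hpt : q + (n - s) • ((1:ℤ), (0:ℤ), (0:ℤ)) + s • ((0:ℤ), (1:ℤ), (0:ℤ)) = (q.1 + n - s, q.2.1 + s, q.2.2) := by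
    simp [Prod.ext_iff, Nat.cast_sub hs]; omega
  rw [hpt]

lemma YY_pow_apply (n : ℕ) (f : ℤ × ℤ × ℤ → A) (q : ℤ × ℤ × ℤ) :
    ((YY k A) ^ n) f q
      = ∑ s ∈ Finset.range (n + 1),
          ((-1) ^ s * (n.choose s) : ℤ) • f (q.1, q.2.1 + n - s, q.2.2 + s) := by
  rw [YY, sub_pow_apply]
  refine Finset.sum_congr rfl fun s hs => ?_
  rw [Finset.mem_range, Nat.lt_succ_iff] at hs
  have hpt : q + (n - s) • ((0:ℤ), (1:ℤ), (0:ℤ)) + s • ((0:ℤ), (0:ℤ), (1:ℤ)) = (q.1, q.2.1 + n - s, q.2.2 + s) := by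
    simp [Prod.ext_iff, Nat.cast_sub hs]; omega
  rw [hpt]

lemma ZZ_pow_apply (n : ℕ) (f : ℤ × ℤ × ℤ → A) (q : ℤ × ℤ × ℤ) :
    ((ZZ k A) ^ n) f q
      = ∑ s ∈ Finset.range (n + 1),
          ((-1) ^ s * (n.choose s) : ℤ) • f (q.1 + n - s, q.2.1, q.2.2 + s) := by
  rw [ZZ, sub_pow_apply]
  refine Finset.sum_congr rfl fun s hs => ?_
  rw [Finset.mem_range, Nat.lt_succ_iff] at hs
  have hpt : q + (n - s) • ((1:ℤ), (0:ℤ), (0:ℤ)) + s • ((0:ℤ), (0:ℤ), (1:ℤ)) = (q.1 + n - s, q.2.1, q.2.2 + s) := by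
    simp [Prod.ext_iff, Nat.cast_sub hs]; omega
  rw [hpt]

lemma XX_pow_apply' (n : ℕ) (f : ℤ × ℤ × ℤ → A) (p x r : ℤ) :
    ((XX k A) ^ n) f (p, x, r)
      = ∑ s ∈ Finset.range (n + 1),
          ((-1) ^ s * (n.choose s) : ℤ) • f (p + n - s, x + s, r) :=
  XX_pow_apply n f (p, x, r)

lemma YY_pow_apply' (n : ℕ) (f : ℤ × ℤ × ℤ → A) (p x r : ℤ) :
    ((YY k A) ^ n) f (p, x, r)
      = ∑ s ∈ Finset.range (n + 1),
          ((-1) ^ s * (n.choose s) : ℤ) • f (p, x + n - s, r + s) :=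
  YY_pow_apply n f (p, x, r)

lemma ZZ_pow_apply' (n : ℕ) (f : ℤ × ℤ × ℤ → A) (p x r : ℤ) :
    ((ZZ k A) ^ n) f (p, x, r)
      = ∑ s ∈ Finset.range (n + 1),
          ((-1) ^ s * (n.choose s) : ℤ) • f (p + n - s, x, r + s) :=
  ZZ_pow_apply n f (p, x, r)

/-- Kill lemma for `XX`: locality of `(u,v)` w.r.t. `op` kills `XX^N` of a distribution
of the shape `L r (op (u p) (v x))`. -/
lemma X_kill (N : ℕ) (u v : ℤ → A) (op : A →ₗ[k] A →ₗ[k] A)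
    (h : ∀ n m : ℤ, locSum op u v N n m = 0) (L : ℤ → A →ₗ[k] A) :
    ((XX k A) ^ N) (fun q => L q.2.2 (op (u q.1) (v q.2.1))) = 0 := by
  funext q
  rw [XX_pow_apply]
  have h' := h (q.1 + N) q.2.1
  unfold locSum at h'
  calc ∑ s ∈ Finset.range (N + 1), ((-1) ^ s * (N.choose s) : ℤ) •
          L q.2.2 (op (u (q.1 + N - s)) (v (q.2.1 + s)))
      = L q.2.2 (∑ s ∈ Finset.range (N + 1), ((-1) ^ s * (N.choose s) : ℤ) •
          op (u (q.1 + N - s)) (v (q.2.1 + s))) := by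
        rw [map_sum]; exact Finset.sum_congr rfl fun s _ => (map_zsmul _ _ _).symm
    _ = 0 := by rw [h', map_zero]

/-- Kill lemma for `YY`. -/
lemma Y_kill (N : ℕ) (v w : ℤ → A) (op : A →ₗ[k] A →ₗ[k] A)
    (h : ∀ n m : ℤ, locSum op v w N n m = 0) (L : ℤ → A →ₗ[k] A) :
    ((YY k A) ^ N) (fun q => L q.1 (op (v q.2.1) (w q.2.2))) = 0 := by
  funext q
  rw [YY_pow_apply]
  have h' := h (q.2.1 + N) q.2.2
  unfold locSum at h'
  calc ∑ s ∈ Finset.range (N + 1), ((-1) ^ s * (N.choose s) : ℤ) •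
          L q.1 (op (v (q.2.1 + N - s)) (w (q.2.2 + s)))
      = L q.1 (∑ s ∈ Finset.range (N + 1), ((-1) ^ s * (N.choose s) : ℤ) •
          op (v (q.2.1 + N - s)) (w (q.2.2 + s))) := by
        rw [map_sum]; exact Finset.sum_congr rfl fun s _ => (map_zsmul _ _ _).symm
    _ = 0 := by rw [h', map_zero]

lemma pow_bump {T : Module.End k (ℤ × ℤ × ℤ → A)} {f : ℤ × ℤ × ℤ → A} {N M : ℕ}
    (h : (T ^ N) f = 0) (hle : N ≤ M) : (T ^ M) f = 0 := by
  rw [← Nat.sub_add_cancel hle, pow_add, Module.End.mul_apply, h, map_zero]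

lemma XY_kill {f : ℤ × ℤ × ℤ → A} {N : ℕ} (hX : ((XX k A) ^ N) f = 0)
    (hY : ((YY k A) ^ N) f = 0) (i m : ℕ) (him : N ≤ i ∨ N ≤ m) :
    ((XX k A) ^ i * (YY k A) ^ m) f = 0 := by
  rcases him with hi | hm
  · have : (XX k A) ^ i * (YY k A) ^ m
        = (XX k A) ^ (i - N) * ((YY k A) ^ m * (XX k A) ^ N) := by
      rw [← (commute_XY.pow_pow N m).eq, ← mul_assoc, ← pow_add,
        Nat.sub_add_cancel hi]
    rw [this, Module.End.mul_apply, Module.End.mul_apply, hX, map_zero, map_zero]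
  · have : (XX k A) ^ i * (YY k A) ^ m
        = ((XX k A) ^ i * (YY k A) ^ (m - N)) * (YY k A) ^ N := by
      rw [mul_assoc, ← pow_add, Nat.sub_add_cancel hm]
    rw [this, Module.End.mul_apply, hY, map_zero]

lemma main_split {f : ℤ × ℤ × ℤ → A} {N : ℕ} (n : ℕ)
    (hX : ((XX k A) ^ N) f = 0) (hY : ((YY k A) ^ N) f = 0) :
    ((ZZ k A) ^ (2 * N) * (YY k A) ^ n) f = 0 := by
  rw [ZZ_eq, commute_XY.add_pow, Finset.sum_mul, LinearMap.sum_apply]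
  apply Finset.sum_eq_zero
  intro i hi
  rw [Finset.mem_range, Nat.lt_succ_iff] at hi
  have hcast : ((2 * N).choose i : Module.End k (ℤ × ℤ × ℤ → A)) * (YY k A) ^ n
      = (YY k A) ^ n * ((2 * N).choose i : Module.End k (ℤ × ℤ × ℤ → A)) :=
    (Nat.commute_cast _ _).symm.eq
  have hrw : (XX k A) ^ i * (YY k A) ^ (2 * N - i) *
        ((2 * N).choose i : Module.End k (ℤ × ℤ × ℤ → A)) * (YY k A) ^ n
      = ((XX k A) ^ i * (YY k A) ^ (2 * N - i + n)) *
        ((2 * N).choose i : Module.End k (ℤ × ℤ × ℤ → A)) := by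
    rw [mul_assoc ((XX k A) ^ i * (YY k A) ^ (2 * N - i)), hcast, ← mul_assoc,
      mul_assoc ((XX k A) ^ i), ← pow_add]
  rw [hrw, Module.End.mul_apply, Module.End.natCast_apply, map_nsmul]
  have : ((XX k A) ^ i * (YY k A) ^ (2 * N - i + n)) f = 0 := by
    apply XY_kill hX hY
    by_cases hiN : N ≤ i
    · exact Or.inl hiN
    · right; omega
  rw [this]
  simp

/-- Evaluation lemma relating `locSum`/`nProd` on the left pattern. -/
lemma eval_left (opo opi : A →ₗ[k] A →ₗ[k] A) (a b c : ℤ → A) (M n : ℕ) (p q : ℤ) :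
    locSum opo a (nProd opi b c n) M p q
      = (((ZZ k A) ^ M * (YY k A) ^ n)
          (fun q' => opo (a q'.1) (opi (b q'.2.1) (c q'.2.2)))) (p - M, 0, q) := by
  rw [Module.End.mul_apply, ZZ_pow_apply']
  unfold locSum nProd locSum
  refine Finset.sum_congr rfl fun t ht => ?_
  rw [YY_pow_apply']
  congr 1
  rw [map_sum]
  refine Finset.sum_congr rfl fun s hs => ?_
  rw [map_zsmul]
  have e1 : p - (M : ℤ) + M - t = p - t := by ring
  have e2 : (0 : ℤ) + n - s = (n : ℤ) - s := by ring
  rw [e1, e2]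

/-- Evaluation lemma relating `locSum`/`nProd` on the right pattern. -/
lemma eval_right (opo opi : A →ₗ[k] A →ₗ[k] A) (a b c : ℤ → A) (M n : ℕ) (p q : ℤ) :
    locSum opo (nProd opi a b n) c M p q
      = (((XX k A) ^ n * (YY k A) ^ M)
          (fun q' => opo (opi (a q'.1) (b q'.2.1)) (c q'.2.2))) (0, p - M, q) := by
  rw [Module.End.mul_apply, XX_pow_apply']
  unfold locSum nProd locSum
  simp only [map_sum, map_zsmul, LinearMap.sum_apply, LinearMap.smul_apply,
    Finset.smul_sum]
  rw [Finset.sum_comm]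
  refine Finset.sum_congr rfl fun s hs => ?_
  rw [YY_pow_apply', Finset.smul_sum]
  refine Finset.sum_congr rfl fun t ht => ?_
  rw [smul_comm]
  have e1 : p - (t : ℤ) + s = p - (M : ℤ) + s + M - t := by ring
  have e2 : (n : ℤ) - s = (0 : ℤ) + n - s := by ring
  rw [e1, e2]

end DongAux

open DongAux

/-- Let `A` be a pre-associative (dendriform) algebra with operations `*` (`st`) and
juxtaposition (`ju`), and `a(z), b(z), c(z)` pairwise mutually `*`-local and `≻`-local
formal distributions over `A`. Then for every `n ∈ ℤ₊`:
(i) `(a(z), (b₍ₙ₎c)(z))` is `≻`-local;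
(ii) `(a(z), (b⁎₍ₙ₎c)(z))` is `*`-local and `≻`-local;
(iii) `((a⁎₍ₙ₎b)(z), c(z))` is `*`-local and `≻`-local. -/
theorem stmt_15 (st ju : A →ₗ[k] A →ₗ[k] A)
    (h1 : ∀ x y z : A, st (st x y) z = st x (st y z))
    (h2 : ∀ x y z : A, ju (st x y) z = ju x (ju y z))
    (h3 : ∀ x y z : A, ju x (st y z) = st (ju x y) z + ju x (ju y z) - ju (ju x y) z)
    (a b c : ℤ → A)
    (habS : IsLocalPair st a b) (hbaS : IsLocalPair st b a)
    (hacS : IsLocalPair st a c) (hcaS : IsLocalPair st c a)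
    (hbcS : IsLocalPair st b c) (hcbS : IsLocalPair st c b)
    (habM : IsLocalPair ju a b) (hbaM : IsLocalPair ju b a)
    (hacM : IsLocalPair ju a c) (hcaM : IsLocalPair ju c a)
    (hbcM : IsLocalPair ju b c) (hcbM : IsLocalPair ju c b) :
    ∀ n : ℕ,
      IsLocalPair ju a (nProd ju b c n) ∧
      (IsLocalPair st a (nProd st b c n) ∧ IsLocalPair ju a (nProd st b c n)) ∧
      (IsLocalPair st (nProd st a b n) c ∧ IsLocalPair ju (nProd st a b n) c) := by
  intro n
  obtain ⟨N1, hN1⟩ := habS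
  obtain ⟨N2, hN2⟩ := habM
  obtain ⟨N3, hN3⟩ := hbcS
  obtain ⟨N4, hN4⟩ := hbcM
  set N := max (max N1 N2) (max N3 N4) with hNdef
  have hle1 : N1 ≤ N := le_trans (le_max_left _ _) (le_max_left _ _)
  have hle2 : N2 ≤ N := le_trans (le_max_right _ _) (le_max_left _ _)
  have hle3 : N3 ≤ N := le_trans (le_max_left _ _) (le_max_right _ _)
  have hle4 : N4 ≤ N := le_trans (le_max_right _ _) (le_max_right _ _)
  refine ⟨?_, ⟨?_, ?_⟩, ?_, ?_⟩
  · -- (i) : (a, (b₍ₙ₎c)_ju) is ju-local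
    set H : ℤ × ℤ × ℤ → A := fun q' => ju (a q'.1) (ju (b q'.2.1) (c q'.2.2)) with hH
    have hHrw : H = fun q' => ju (st (a q'.1) (b q'.2.1)) (c q'.2.2) :=
      funext fun q' => (h2 _ _ _).symm
    have hX : ((XX k A) ^ N) H = 0 := by
      rw [hHrw]
      exact pow_bump (X_kill N1 a b st hN1 (fun r => ju.flip (c r))) hle1
    have hY : ((YY k A) ^ N) H = 0 :=
      pow_bump (Y_kill N4 b c ju hN4 (fun p => ju (a p))) hle4
    exact ⟨2 * N, fun p q => by
      rw [eval_left ju ju a b c (2 * N) n p q, main_split n hX hY]; rfl⟩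
  · -- (ii) st : (a, (b⁎₍ₙ₎c)) is st-local
    set H : ℤ × ℤ × ℤ → A := fun q' => st (a q'.1) (st (b q'.2.1) (c q'.2.2)) with hH
    have hHrw : H = fun q' => st (st (a q'.1) (b q'.2.1)) (c q'.2.2) :=
      funext fun q' => (h1 _ _ _).symm
    have hX : ((XX k A) ^ N) H = 0 := by
      rw [hHrw]
      exact pow_bump (X_kill N1 a b st hN1 (fun r => st.flip (c r))) hle1
    have hY : ((YY k A) ^ N) H = 0 :=
      pow_bump (Y_kill N3 b c st hN3 (fun p => st (a p))) hle3
    exact ⟨2 * N, fun p q => by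
      rw [eval_left st st a b c (2 * N) n p q, main_split n hX hY]; rfl⟩
  · -- (ii) ju : (a, (b⁎₍ₙ₎c)) is ju-local
    set H : ℤ × ℤ × ℤ → A := fun q' => ju (a q'.1) (st (b q'.2.1) (c q'.2.2)) with hH
    have hHrw : H = (fun q' => st (ju (a q'.1) (b q'.2.1)) (c q'.2.2))
        + (fun q' => ju (st (a q'.1) (b q'.2.1)) (c q'.2.2))
        - (fun q' => ju (ju (a q'.1) (b q'.2.1)) (c q'.2.2)) := by
      funext q'
      show ju (a q'.1) (st (b q'.2.1) (c q'.2.2)) = _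
      rw [h3, ← h2]
      rfl
    have hX : ((XX k A) ^ N) H = 0 := by
      have e1 : ((XX k A) ^ N) (fun q' => st (ju (a q'.1) (b q'.2.1)) (c q'.2.2)) = 0 :=
        pow_bump (X_kill N2 a b ju hN2 (fun r => st.flip (c r))) hle2
      have e2 : ((XX k A) ^ N) (fun q' => ju (st (a q'.1) (b q'.2.1)) (c q'.2.2)) = 0 :=
        pow_bump (X_kill N1 a b st hN1 (fun r => ju.flip (c r))) hle1
      have e3 : ((XX k A) ^ N) (fun q' => ju (ju (a q'.1) (b q'.2.1)) (c q'.2.2)) = 0 :=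
        pow_bump (X_kill N2 a b ju hN2 (fun r => ju.flip (c r))) hle2
      rw [hHrw, map_sub, map_add, e1, e2, e3]
      simp
    have hY : ((YY k A) ^ N) H = 0 :=
      pow_bump (Y_kill N3 b c st hN3 (fun p => ju (a p))) hle3
    exact ⟨2 * N, fun p q => by
      rw [eval_left ju st a b c (2 * N) n p q, main_split n hX hY]; rfl⟩
  · -- (iii) st : ((a⁎₍ₙ₎b), c) is st-local
    set H : ℤ × ℤ × ℤ → A := fun q' => st (st (a q'.1) (b q'.2.1)) (c q'.2.2) with hH
    have hHrw : H = fun q' => st (a q'.1) (st (b q'.2.1) (c q'.2.2)) :=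
      funext fun q' => h1 _ _ _
    have hY : ((YY k A) ^ N3) H = 0 := by
      rw [hHrw]
      exact Y_kill N3 b c st hN3 (fun p => st (a p))
    exact ⟨N3, fun p q => by
      rw [eval_right st st a b c N3 n p q, Module.End.mul_apply, hY, map_zero]; rfl⟩
  · -- (iii) ju : ((a⁎₍ₙ₎b), c) is ju-local
    set H : ℤ × ℤ × ℤ → A := fun q' => ju (st (a q'.1) (b q'.2.1)) (c q'.2.2) with hH
    have hHrw : H = fun q' => ju (a q'.1) (ju (b q'.2.1) (c q'.2.2)) :=
      funext fun q' => h2 _ _ _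
    have hY : ((YY k A) ^ N4) H = 0 := by
      rw [hHrw]
      exact Y_kill N4 b c ju hN4 (fun p => ju (a p))
    exact ⟨N4, fun p q => by
      rw [eval_right ju st a b c N4 n p q, Module.End.mul_apply, hY, map_zero]; rfl⟩
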